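/- arXiv:2502.15045 — 2 statements merged into one kernel-verified Lean document; each statement's English description precedes it below -/
import Mathlib

section
/- For any collection of n mutually unbiased bases {|φ_x^a⟩} (x = 0,...,n−1, a = 0,...,d−1) in a d-dimensional complex Hilbert space, any density matrix ρ, and any fixed choice of outcomes a_x ∈ {0,...,d−1} for each x, the average (1/n) ∑_{x=0}^{n−1} ⟨φ_x^{a_x}| ρ |φ_x^{a_x}⟩ is at most (1/d)(1 + (d−1)/√n). -/
open Matrix Finset Filter
open scoped ComplexOrder

noncomputable def expec {d : ℕ} (ρ : Matrix (Fin d) (Fin d) ℂ) (v : Fin d → ℂ) : ℝ :=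
  Complex.re (dotProduct (star v) (ρ.mulVec v))

def IsDensity {d : ℕ} (ρ : Matrix (Fin d) (Fin d) ℂ) : Prop :=
  ρ.PosSemidef ∧ ρ.trace = 1

def IsMUBFamily {d n : ℕ} (φ : Fin n → Fin d → Fin d → ℂ) : Prop :=
  (∀ x a b, dotProduct (star (φ x a)) (φ x b) = if a = b then 1 else 0) ∧
  (∀ x y a b, x ≠ y → ‖dotProduct (star (φ x a)) (φ y b)‖ = 1 / Real.sqrt d)

noncomputable def outer {d : ℕ} (v : Fin d → ℂ) : Matrix (Fin d) (Fin d) ℂ :=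
  vecMulVec v (star v)

noncomputable def gibbs {d : ℕ} (β : ℝ) (H : Matrix (Fin d) (Fin d) ℂ) : Matrix (Fin d) (Fin d) ℂ :=
  (NormedSpace.exp ((-β : ℂ) • H)).trace⁻¹ • NormedSpace.exp ((-β : ℂ) • H)

/-! ### Auxiliary lemmas -/

lemma outer_isHermitian {d : ℕ} (v : Fin d → ℂ) : (outer v).IsHermitian := by
  ext i j
  simp [outer, vecMulVec_apply, conjTranspose_apply, mul_comm]

lemma trace_mul_outer {d : ℕ} (ρ : Matrix (Fin d) (Fin d) ℂ) (v : Fin d → ℂ) :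
    (ρ * outer v).trace = dotProduct (star v) (ρ.mulVec v) := by
  simp only [Matrix.trace, Matrix.diag, Matrix.mul_apply, outer, vecMulVec_apply,
    dotProduct, mulVec, Pi.star_apply]
  congr 1; ext i
  rw [Finset.mul_sum]
  congr 1; ext j
  ring

lemma trace_outer_mul_outer {d : ℕ} (v w : Fin d → ℂ) :
    (outer v * outer w).trace = dotProduct (star v) w * dotProduct (star w) v := by
  simp only [Matrix.trace, Matrix.diag, Matrix.mul_apply, outer, vecMulVec_apply,
    dotProduct, Pi.star_apply, Finset.sum_mul_sum]
  rw [Finset.sum_comm]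
  congr 1; ext j
  congr 1; ext i
  ring

lemma trace_outer {d : ℕ} (v : Fin d → ℂ) :
    (outer v).trace = dotProduct (star v) v := by
  simp [Matrix.trace, Matrix.diag, outer, vecMulVec_apply, dotProduct, mul_comm]

lemma trace_eq_sum_eig {d : ℕ} {A : Matrix (Fin d) (Fin d) ℂ} (hA : A.IsHermitian) :
    A.trace = ∑ i, (hA.eigenvalues i : ℂ) := by
  conv_lhs => rw [hA.spectral_theorem, Unitary.conjStarAlgAut_apply]
  rw [Matrix.trace_mul_cycle, Unitary.coe_star_mul_self, Matrix.one_mul,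
    Matrix.trace_diagonal]
  rfl

lemma trace_sq_eq_sum_eig_sq {d : ℕ} {A : Matrix (Fin d) (Fin d) ℂ} (hA : A.IsHermitian) :
    (A * A).trace = ∑ i, ((hA.eigenvalues i : ℂ))^2 := by
  set U : Matrix (Fin d) (Fin d) ℂ := (hA.eigenvectorUnitary : Matrix (Fin d) (Fin d) ℂ)
  set D : Matrix (Fin d) (Fin d) ℂ := diagonal (RCLike.ofReal ∘ hA.eigenvalues)
  have h1 : star U * U = 1 := Unitary.coe_star_mul_self _
  have key : A * A = U * (D * D) * star U := by
    conv_lhs => rw [hA.spectral_theorem, Unitary.conjStarAlgAut_apply]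
    calc (U * D * star U) * (U * D * star U)
        = U * D * (star U * U) * D * star U := by
          simp only [Matrix.mul_assoc]
      _ = U * (D * D) * star U := by rw [h1]; simp only [Matrix.mul_one, Matrix.mul_assoc]
  rw [key, Matrix.trace_mul_cycle, h1, Matrix.one_mul]
  simp only [D, diagonal_mul_diagonal, Matrix.trace_diagonal]
  congr 1; ext i
  simp [sq]

lemma re_trace_mul_le_sup {d : ℕ} {A : Matrix (Fin d) (Fin d) ℂ} (hd : 1 ≤ d)
    {ρ : Matrix (Fin d) (Fin d) ℂ}
    (hA : A.IsHermitian) (hρ : ρ.PosSemidef) (hτ : ρ.trace = 1) :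
    Complex.re (ρ * A).trace ≤
      Finset.univ.sup' ⟨⟨0, hd⟩, mem_univ _⟩ hA.eigenvalues := by
  set U : Matrix (Fin d) (Fin d) ℂ := (hA.eigenvectorUnitary : Matrix (Fin d) (Fin d) ℂ)
  set D : Matrix (Fin d) (Fin d) ℂ := diagonal (RCLike.ofReal ∘ hA.eigenvalues)
  have h1 : star U * U = 1 := Unitary.coe_star_mul_self _
  have h2 : U * star U = 1 := Unitary.coe_mul_star_self _
  set B : Matrix (Fin d) (Fin d) ℂ := star U * ρ * U with hBdef
  have hB : B.PosSemidef := hρ.conjTranspose_mul_mul_same U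
  have key : ρ * A = U * (B * D) * star U := by
    conv_lhs => rw [hA.spectral_theorem, Unitary.conjStarAlgAut_apply]
    simp only [hBdef, Matrix.mul_assoc]
    rw [← Matrix.mul_assoc U (star U), h2, Matrix.one_mul]
  have htr : (ρ * A).trace = ∑ i, B i i * (hA.eigenvalues i : ℂ) := by
    rw [key, Matrix.trace_mul_cycle, h1, Matrix.one_mul]
    simp [Matrix.trace, Matrix.diag, Matrix.mul_diagonal, D]
  have hre : Complex.re (ρ * A).trace = ∑ i, (B i i).re * hA.eigenvalues i := by
    rw [htr, Complex.re_sum]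
    refine Finset.sum_congr rfl fun i _ => ?_
    simp [Complex.mul_re]
  have hq0 : ∀ i, 0 ≤ (B i i).re := by
    intro i
    have h := hB.re_dotProduct_nonneg (Pi.single i 1)
    simpa [dotProduct, Matrix.mulVec_single, Pi.single_apply, apply_ite] using h
  have hq1 : ∑ i, (B i i).re = 1 := by
    have hτB : B.trace = 1 := by
      rw [hBdef, Matrix.trace_mul_cycle, h2, Matrix.one_mul, hτ]
    have h2' := congrArg Complex.re hτB
    rw [Matrix.trace] at h2'
    simpa [Matrix.diag, Complex.re_sum] using h2'
  rw [hre]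
  calc ∑ i, (B i i).re * hA.eigenvalues i
      ≤ ∑ i, (B i i).re * Finset.univ.sup' ⟨⟨0, hd⟩, mem_univ _⟩ hA.eigenvalues := by
        refine Finset.sum_le_sum fun i _ => ?_
        exact mul_le_mul_of_nonneg_left (Finset.le_sup' _ (mem_univ i)) (hq0 i)
    _ = 1 * Finset.univ.sup' ⟨⟨0, hd⟩, mem_univ _⟩ hA.eigenvalues := by
        rw [← Finset.sum_mul, hq1]
    _ = _ := one_mul _

lemma point_bound {d : ℕ} (hd : 1 ≤ d) (g : Fin d → ℝ) (h0 : ∑ i, g i = 0)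
    (i₀ : Fin d) (c : ℝ) (hc : 0 ≤ c)
    (hS : ((d:ℝ) - 1) * ∑ i, (g i)^2 ≤ (d:ℝ) * c^2) :
    g i₀ ≤ c := by
  have hd' : (1:ℝ) ≤ (d:ℝ) := by exact_mod_cast hd
  have hCS : (∑ i ∈ univ.erase i₀, g i)^2 ≤
      ((univ.erase i₀).card : ℝ) * ∑ i ∈ univ.erase i₀, (g i)^2 := by
    exact sq_sum_le_card_mul_sum_sq
  have herase : ∑ i ∈ univ.erase i₀, g i = - g i₀ := by
    have h := Finset.add_sum_erase univ g (mem_univ i₀)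
    rw [h0] at h
    linarith
  have hcard : ((univ.erase i₀).card : ℝ) = (d:ℝ) - 1 := by
    rw [Finset.card_erase_of_mem (mem_univ i₀)]
    simp
    push_cast [Nat.cast_sub hd]
    ring
  have hsplit : ∑ i ∈ univ.erase i₀, (g i)^2 = (∑ i, (g i)^2) - (g i₀)^2 :=
    Finset.sum_erase_eq_sub (mem_univ i₀)
  rw [herase, hcard, hsplit, neg_sq] at hCS
  have h2 : (g i₀)^2 ≤ c^2 := by nlinarith [hCS, hS, sq_nonneg (g i₀)]
  calc g i₀ ≤ |g i₀| := le_abs_self _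
    _ = Real.sqrt ((g i₀)^2) := (Real.sqrt_sq_eq_abs _).symm
    _ ≤ Real.sqrt (c^2) := Real.sqrt_le_sqrt h2
    _ = c := Real.sqrt_sq hc

/-- MUB overlap bound for a fixed choice of outcomes (Rastegin). -/
theorem mub_overlap_bound {d n : ℕ} (hd : 1 ≤ d) (hn : 1 ≤ n)
    (φ : Fin n → Fin d → Fin d → ℂ) (hφ : IsMUBFamily φ)
    (ρ : Matrix (Fin d) (Fin d) ℂ) (hρ : IsDensity ρ)
    (a : Fin n → Fin d) :
    (1 / (n : ℝ)) * ∑ x, expec ρ (φ x (a x)) ≤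
      (1 / (d : ℝ)) * (1 + ((d : ℝ) - 1) / Real.sqrt n) := by
  have hd0 : (0:ℝ) < (d:ℝ) := by exact_mod_cast hd
  have hn0 : (0:ℝ) < (n:ℝ) := by exact_mod_cast hn
  have hd1 : (1:ℝ) ≤ (d:ℝ) := by exact_mod_cast hd
  have hn1 : (1:ℝ) ≤ (n:ℝ) := by exact_mod_cast hn
  set u : Fin n → Fin d → ℂ := fun x => φ x (a x) with hu
  set A : Matrix (Fin d) (Fin d) ℂ := ∑ x, outer (u x) with hAdef
  have hA : A.IsHermitian := by
    rw [hAdef, Matrix.IsHermitian, Matrix.conjTranspose_sum]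
    exact Finset.sum_congr rfl fun x _ => outer_isHermitian (u x)
  -- the sum of expectations equals re tr(ρ A)
  have hsum : ∑ x, expec ρ (u x) = Complex.re (ρ * A).trace := by
    rw [hAdef, Finset.mul_sum, Matrix.trace_sum, Complex.re_sum]
    exact Finset.sum_congr rfl fun x _ => by rw [trace_mul_outer]; rfl
  -- eigenvalue sums
  have E1 : ∑ i, hA.eigenvalues i = (n:ℝ) := by
    have h := trace_eq_sum_eig hA
    have htr : A.trace = (n:ℂ) := by
      rw [hAdef, Matrix.trace_sum]
      have h1 : ∀ x : Fin n, (outer (u x)).trace = 1 := fun x => by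
        rw [trace_outer]; simpa using hφ.1 x (a x) (a x)
      simp [h1]
    rw [htr] at h
    exact_mod_cast h.symm
  have habs2 : ∀ x y : Fin n, x ≠ y →
      ‖dotProduct (star (u x)) (u y)‖^2 = 1 / (d:ℝ) := by
    intro x y hxy
    rw [hφ.2 x y (a x) (a y) hxy]
    rw [div_pow, one_pow, Real.sq_sqrt hd0.le]
  have hreAA : Complex.re (A*A).trace =
      ∑ x, ∑ y, ‖dotProduct (star (u x)) (u y)‖^2 := by
    rw [hAdef, Finset.sum_mul_sum]
    rw [Matrix.trace_sum, Complex.re_sum]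
    refine Finset.sum_congr rfl fun x _ => ?_
    rw [Matrix.trace_sum, Complex.re_sum]
    refine Finset.sum_congr rfl fun y _ => ?_
    rw [trace_outer_mul_outer]
    have hconj : dotProduct (star (u y)) (u x) =
        starRingEnd ℂ (dotProduct (star (u x)) (u y)) := by
      simp [dotProduct, map_sum, mul_comm]
    rw [hconj, Complex.mul_conj]
    simp [Complex.sq_norm]
  have hval : ∑ x, ∑ y, ‖dotProduct (star (u x)) (u y)‖^2 =
      (n:ℝ) + n*((n:ℝ)-1)/d := by
    have hrow : ∀ x : Fin n,
        ∑ y, ‖dotProduct (star (u x)) (u y)‖^2 = 1 + ((n:ℝ)-1)/d := by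
      intro x
      rw [← Finset.add_sum_erase univ _ (mem_univ x)]
      have hdiag : ‖dotProduct (star (u x)) (u x)‖^2 = 1 := by
        have := hφ.1 x (a x) (a x)
        simp only [if_pos rfl] at this
        rw [hu]
        simp [this]
      have hoff : ∑ y ∈ univ.erase x, ‖dotProduct (star (u x)) (u y)‖^2
          = ((n:ℝ)-1)/d := by
        rw [Finset.sum_congr rfl (fun y hy => habs2 x y (Finset.ne_of_mem_erase hy).symm)]
        rw [Finset.sum_const, Finset.card_erase_of_mem (mem_univ x), Finset.card_univ,
          Fintype.card_fin]
        rw [nsmul_eq_mul, Nat.cast_sub hn, Nat.cast_one]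
        ring
      rw [hdiag, hoff]
    rw [Finset.sum_congr rfl (fun x _ => hrow x), Finset.sum_const, Finset.card_univ,
      Fintype.card_fin]
    rw [nsmul_eq_mul]
    ring
  have E2 : ∑ i, (hA.eigenvalues i)^2 = (n:ℝ) + n*((n:ℝ)-1)/d := by
    have h := congrArg Complex.re (trace_sq_eq_sum_eig_sq hA)
    rw [hreAA, hval] at h
    rw [h, Complex.re_sum]
    exact Finset.sum_congr rfl fun i _ => by
      rw [← Complex.ofReal_pow, Complex.ofReal_re]
  -- bound the max eigenvalue
  set c : ℝ := ((d:ℝ) - 1) * Real.sqrt n / d with hc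
  have hc0 : 0 ≤ c := by
    apply div_nonneg _ hd0.le
    exact mul_nonneg (by linarith) (Real.sqrt_nonneg _)
  have hmaxbound : Finset.univ.sup' ⟨⟨0, hd⟩, mem_univ _⟩ hA.eigenvalues
      ≤ (n:ℝ)/d + c := by
    obtain ⟨i₀, -, hi₀⟩ := Finset.exists_mem_eq_sup' ⟨⟨0, hd⟩, mem_univ _⟩ hA.eigenvalues
    rw [hi₀]
    have hpb := point_bound hd (fun i => hA.eigenvalues i - (n:ℝ)/d) ?_ i₀ c hc0 ?_
    · linarith [hpb]
    · rw [Finset.sum_sub_distrib, E1, Finset.sum_const, Finset.card_univ, Fintype.card_fin]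
      field_simp
      have h' : (d:ℝ) * ((n:ℝ)/d) = n := by field_simp
      rw [nsmul_eq_mul]
      linarith
    · have hexp : ∑ i, (hA.eigenvalues i - (n:ℝ)/d)^2 = (n:ℝ)*((d:ℝ)-1)/d := by
        have : ∀ i : Fin d, (hA.eigenvalues i - (n:ℝ)/d)^2 =
            (hA.eigenvalues i)^2 - 2*((n:ℝ)/d)*hA.eigenvalues i + ((n:ℝ)/d)^2 := by
          intro i; ring
        rw [Finset.sum_congr rfl fun i _ => this i]
        rw [Finset.sum_add_distrib, Finset.sum_sub_distrib, E2, ← Finset.mul_sum, E1,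
          Finset.sum_const, Finset.card_univ, Fintype.card_fin]
        field_simp
        rw [nsmul_eq_mul]
        have h' : (d:ℝ) * (d * ((n:ℝ)^2/d^2)) = n^2 := by field_simp
        linear_combination h'
      have hs : Real.sqrt n ^ 2 = (n:ℝ) := Real.sq_sqrt hn0.le
      rw [hexp, hc]
      apply le_of_eq
      rw [div_pow, mul_pow, hs]
      field_simp
  -- put it together
  have hfinal : Complex.re (ρ * A).trace ≤ (n:ℝ)/d + c :=
    le_trans (re_trace_mul_le_sup hd hA hρ.1 hρ.2) hmaxbound
  have hmain : (1 / (n : ℝ)) * ∑ x, expec ρ (u x) ≤ (1/(n:ℝ)) * ((n:ℝ)/d + c) := by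
    rw [hsum]
    exact mul_le_mul_of_nonneg_left hfinal (by positivity)
  have hident : (1/(n:ℝ)) * ((n:ℝ)/d + c) = (1 / (d : ℝ)) * (1 + ((d : ℝ) - 1) / Real.sqrt n) := by
    rw [hc]
    have hs : Real.sqrt n * Real.sqrt n = (n:ℝ) := Real.mul_self_sqrt hn0.le
    have hs0 : Real.sqrt n ≠ 0 := by positivity
    field_simp
    linear_combination ((d:ℝ) - 1)*hs
  calc (1 / (n : ℝ)) * ∑ x, expec ρ (u x) ≤ (1/(n:ℝ)) * ((n:ℝ)/d + c) := hmain
    _ = _ := hident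
end

section
/- Fix ω > 0 and β > 0. With n = d + 1, the ratio ξ(d) = [ω − ω e^{βω}/(e^{βω}+d−1)] / [(ω/d)(1 + (d−1)/√(d+1)) − ω e^{βω}/(e^{βω}+d−1)] satisfies: there exist constants c_1, c_2 > 0 and D such that for all d ≥ D, c_1 √d ≤ ξ(d) ≤ c_2 √d. In particular ξ(d) → ∞ as d → ∞. -/
open Filter

/-- The quantum-to-classical work ratio with n = d+1 mutually unbiased bases. -/
noncomputable def xiRatio (ω β : ℝ) (d : ℕ) : ℝ :=
  (ω - ω * Real.exp (β * ω) / (Real.exp (β * ω) + (d : ℝ) - 1)) /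
    ((ω / (d : ℝ)) * (1 + ((d : ℝ) - 1) / Real.sqrt ((d : ℝ) + 1)) -
      ω * Real.exp (β * ω) / (Real.exp (β * ω) + (d : ℝ) - 1))

set_option maxHeartbeats 1000000 in
/-- The ratio ξ(d) grows as Θ(√d); in particular ξ(d) → ∞. -/
theorem xiRatio_sqrt_growth (ω β : ℝ) (hω : 0 < ω) (hβ : 0 < β) :
    ∃ c₁ c₂ : ℝ, 0 < c₁ ∧ 0 < c₂ ∧ ∃ D : ℕ,
      (∀ d : ℕ, D ≤ d →
        c₁ * Real.sqrt d ≤ xiRatio ω β d ∧ xiRatio ω β d ≤ c₂ * Real.sqrt d) ∧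
      Tendsto (xiRatio ω β) atTop atTop := by
  set E := Real.exp (β * ω) with hEdef
  have hE1 : 1 < E := by
    have h := Real.add_one_le_exp (β * ω)
    nlinarith [mul_pos hβ hω]
  set D : ℕ := ⌈(2*E+20)^2⌉₊ with hDdef
  have key : ∀ d : ℕ, D ≤ d →
      (1/4 : ℝ) * Real.sqrt d ≤ xiRatio ω β d ∧ xiRatio ω β d ≤ 4 * Real.sqrt d := by
    intro d hd
    set x : ℝ := (d : ℝ) with hxdef
    set t : ℝ := Real.sqrt x with htdef
    set s : ℝ := Real.sqrt (x + 1) with hsdef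
    have hxD : (2*E+20)^2 ≤ x := by
      calc (2*E+20)^2 ≤ (D:ℝ) := Nat.le_ceil _
        _ ≤ x := Nat.cast_le.mpr hd
    have hx0 : (0:ℝ) ≤ x := le_trans (by positivity) hxD
    have ht2 : t^2 = x := Real.sq_sqrt hx0
    have hs2 : s^2 = x + 1 := Real.sq_sqrt (by linarith)
    have ht0 : 0 ≤ t := Real.sqrt_nonneg _
    have hs0 : 0 ≤ s := Real.sqrt_nonneg _
    have hts : t ≤ s := Real.sqrt_le_sqrt (by linarith)
    have hst : s ≤ t + 1 := by
      have h1 : x + 1 ≤ (t+1)^2 := by nlinarith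
      calc s ≤ Real.sqrt ((t+1)^2) := Real.sqrt_le_sqrt h1
        _ = t + 1 := Real.sqrt_sq (by linarith)
    have ht : 2*E + 20 ≤ t := by
      calc 2*E + 20 = Real.sqrt ((2*E+20)^2) := (Real.sqrt_sq (by linarith)).symm
        _ ≤ t := Real.sqrt_le_sqrt hxD
    have hx1 : 1 < x := by nlinarith
    have hA : 0 < E + x - 1 := by linarith
    have hs0' : 0 < s := by nlinarith
    have ht0' : 0 < t := by linarith
    have hx0' : 0 < x := by linarith
    set C : ℝ := x - 1 + E - s*(E-1) with hCdef
    have hsE : s*(E-1) ≤ (t+1)*(E-1) := by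
      exact mul_le_mul_of_nonneg_right hst (by linarith)
    have hC : t^2/2 ≤ C := by
      have h2 : (t+1)*(E-1) ≤ (t+1)*((t-22)/2) :=
        mul_le_mul_of_nonneg_left (by linarith) (by linarith)
      nlinarith
    have hC0 : 0 < C := lt_of_lt_of_le (by positivity) hC
    set B : ℝ := s*(E+x-1) + (x-1)*(E+x-1) - E*x*s with hBdef
    have hBC : B = (x-1)*C := by rw [hBdef, hCdef]; ring
    have hB : 0 < B := by rw [hBC]; exact mul_pos (by linarith) hC0
    have hxi : xiRatio ω β d = (x*s)/C := by
      have hden : (ω / x) * (1 + (x - 1) / s) - ω * E / (E + x - 1)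
          = ω * B / (x * s * (E + x - 1)) := by
        rw [hBdef]; field_simp
      have hnum : ω - ω * E / (E + x - 1) = ω * (x - 1) / (E + x - 1) := by
        field_simp; ring
      have hω' : ω ≠ 0 := ne_of_gt hω
      have hA' : E + x - 1 ≠ 0 := ne_of_gt hA
      have hB' : B ≠ 0 := ne_of_gt hB
      have hx' : x ≠ 0 := ne_of_gt hx0'
      have hs' : s ≠ 0 := ne_of_gt hs0'
      have hC' : C ≠ 0 := ne_of_gt hC0
      have hx1' : x - 1 ≠ 0 := by intro h; linarith [sub_eq_zero.mp h]
      unfold xiRatio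
      rw [← hEdef, ← hxdef, ← hsdef, hnum, hden, hBC]
      field_simp
    clear_value t s C B x E D
    clear hDdef hEdef hxdef htdef hsdef hBdef hxD hd
    have hCle : C ≤ x + t/2 := by
      have hsE0 : 0 ≤ s*(E-1) := mul_nonneg hs0 (by linarith)
      nlinarith
    constructor
    · rw [hxi, le_div_iff₀ hC0]
      have h1 : t*C ≤ t*(x + t/2) := mul_le_mul_of_nonneg_left hCle ht0
      have h2 : x*t ≤ x*s := mul_le_mul_of_nonneg_left hts hx0
      nlinarith
    · rw [hxi, div_le_iff₀ hC0]
      have h1 : x*s ≤ x*(t+1) := mul_le_mul_of_nonneg_left hst hx0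
      have h2 : (4*t)*(t^2/2) ≤ (4*t)*C := mul_le_mul_of_nonneg_left hC (by linarith)
      nlinarith
  refine ⟨1/4, 4, by norm_num, by norm_num, D, key, ?_⟩
  have hsq : Tendsto (fun d : ℕ => (1/4 : ℝ) * Real.sqrt d) atTop atTop := by
    apply Tendsto.const_mul_atTop (by norm_num : (0:ℝ) < 1/4)
    apply tendsto_atTop_atTop.mpr
    intro b
    refine ⟨⌈b^2⌉₊, fun a ha => ?_⟩
    rcases le_or_gt b 0 with hb | hb
    · exact le_trans hb (Real.sqrt_nonneg _)
    · have h1 : b^2 ≤ (a:ℝ) := le_trans (Nat.le_ceil _) (Nat.cast_le.mpr ha)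
      calc b = Real.sqrt (b^2) := (Real.sqrt_sq hb.le).symm
        _ ≤ Real.sqrt a := Real.sqrt_le_sqrt h1
  apply tendsto_atTop_mono' _ _ hsq
  filter_upwards [eventually_ge_atTop D] with d hd
  exact (key d hd).1
end
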